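/- Let T be a finite rooted tree with at least two leaves, let u_0 and u_ℓ be two distinct leaves of T such that the paths from the root to u_0 and from the root to u_ℓ share no edge, and let u_1, …, u_{ℓ−1} denote the remaining leaves. Let q ≥ 1 and S_a, S_b : {1,…,q} → Bool. Define a directed graph D as follows: orient every edge of T from parent to child, except the edges on the path from the root to u_ℓ, which are oriented from child to parent; add, for each i ∈ {1,…,q}, fresh vertices v^i_0, v^i_1, …, v^i_ℓ with directed edges v^i_j → v^i_{j+1} for 0 ≤ j < ℓ; add the directed edge u_0 → v^i_0 if and only if S_a(i) = true; add the directed edge v^i_ℓ → u_ℓ if and only if S_b(i) = true; and add directed edges v^i_j → u_j for every i and every 0 < j < ℓ. Then D contains a directed cycle if and only if there exists an index i with S_a(i) = true and S_b(i) = true. -/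

import Mathlib

/-- The directed adjacency relation of the lower-bound gadget `D`.  Vertices are either
tree vertices (`Sum.inl`) or path vertices `v^i_j` (`Sum.inr (i, j)`).  Tree edges
`(parent b, b)` are oriented from parent to child, except edges on the path from the
root to the leaf `u (Fin.last ℓ)`, which are oriented from child to parent.  Each path
`v^i_0 → v^i_1 → ⋯ → v^i_ℓ` is directed; the edge `u 0 → v^i_0` is present iff
`Sa i = true`, the edge `v^i_ℓ → u ℓ` is present iff `Sb i = true`, and the edges
`v^i_j → u j` are present for all `0 < j < ℓ`. -/
def gadgetAdj {A : Type*} (root : A) (parent : A → A) (ℓ q : ℕ)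
    (u : Fin (ℓ + 1) → A) (Sa Sb : Fin q → Bool) :
    (A ⊕ (Fin q × Fin (ℓ + 1))) → (A ⊕ (Fin q × Fin (ℓ + 1))) → Prop
  | .inl a, .inl b =>
      (parent b = a ∧ b ≠ root ∧ ¬ (∃ n, parent^[n] (u (Fin.last ℓ)) = b)) ∨
        (parent a = b ∧ a ≠ root ∧ (∃ n, parent^[n] (u (Fin.last ℓ)) = a))
  | .inl a, .inr (i, j) => a = u 0 ∧ (j : ℕ) = 0 ∧ Sa i = true
  | .inr (i, j), .inl a =>
      ((j : ℕ) = ℓ ∧ a = u (Fin.last ℓ) ∧ Sb i = true) ∨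
        (0 < (j : ℕ) ∧ (j : ℕ) < ℓ ∧ a = u j)
  | .inr (i, j), .inr (i', j') => i = i' ∧ (j' : ℕ) = (j : ℕ) + 1

/-- Potential function used to show the gadget is acyclic when the sets are disjoint. -/
def gMeasure {A : Type*} (M : ℕ) (depth : A → ℕ) (onPath dead : A → Prop)
    [DecidablePred onPath] [DecidablePred dead] (ℓ : ℕ) {q : ℕ} (d0 : ℕ) (Sa : Fin q → Bool) :
    (A ⊕ (Fin q × Fin (ℓ + 1))) → ℤ
  | .inl a =>
      if onPath a then (depth a : ℤ) else if dead a then -((M : ℤ) + ℓ + 3) else -(depth a : ℤ)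
  | .inr (i, j) => if Sa i then -(d0 : ℤ) - 1 - (j : ℕ) else (M : ℤ) + 2 + ℓ - (j : ℕ)

/-- For a finite rooted tree (given by `root` and `parent`) whose leaves are exactly
`u 0, u 1, …, u ℓ`, with the root-to-`u 0` and root-to-`u ℓ` paths edge-disjoint,
the directed gadget graph `D` contains a directed cycle if and only if there is an
index `i` with `Sa i = true` and `Sb i = true`. -/
theorem gadget_has_directed_cycle_iff_intersect
    {A : Type*} [Fintype A]
    (root : A) (parent : A → A)
    (hroot : parent root = root)
    (hreach : ∀ a : A, ∃ n : ℕ, parent^[n] a = root)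
    (ℓ q : ℕ) (hℓ : 1 ≤ ℓ) (hq : 1 ≤ q)
    (u : Fin (ℓ + 1) → A) (hinj : Function.Injective u)
    (hleaf : ∀ j : Fin (ℓ + 1), ∀ b : A, parent b = u j → b = u j)
    (hall : ∀ a : A, (∀ b : A, parent b = a → b = a) → ∃ j, u j = a)
    (hdisj : ∀ x : A, (∃ n, parent^[n] (u 0) = x) →
      (∃ m, parent^[m] (u (Fin.last ℓ)) = x) → x = root)
    (Sa Sb : Fin q → Bool) :
    (∃ v : A ⊕ (Fin q × Fin (ℓ + 1)),
        Relation.TransGen (gadgetAdj root parent ℓ q u Sa Sb) v v) ↔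
      ∃ i : Fin q, Sa i = true ∧ Sb i = true := by
  classical
  set R := gadgetAdj root parent ℓ q u Sa Sb with hR
  -- leaves absorb iterated preimages of `parent`
  have habs : ∀ (j : Fin (ℓ + 1)) (n : ℕ) (x : A), parent^[n] x = u j → x = u j := by
    intro j n
    induction n with
    | zero => intro x h; exact h
    | succ n ih =>
      intro x h
      rw [Function.iterate_succ_apply'] at h
      exact ih x (hleaf j _ h)
  -- non-last leaves are not on the path from root to `u (Fin.last ℓ)`
  have hnotpath : ∀ j : Fin (ℓ + 1), (j : ℕ) < ℓ →
      ¬ ∃ n, parent^[n] (u (Fin.last ℓ)) = u j := by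
    rintro j hj ⟨n, hn⟩
    have h1 := habs j n _ hn
    have h2 := hinj h1
    have : (Fin.last ℓ : Fin (ℓ + 1)) = j := h2
    have : ℓ = (j : ℕ) := congrArg Fin.val this
    omega
  constructor
  · rintro ⟨v, hv⟩
    by_contra hno
    push_neg at hno
    set depth : A → ℕ := fun a => Nat.find (hreach a) with hdepth
    have depth_spec : ∀ a, parent^[depth a] a = root := fun a => Nat.find_spec (hreach a)
    have depth_min : ∀ a n, parent^[n] a = root → depth a ≤ n :=
      fun a n h => Nat.find_min' (hreach a) h
    have depth_pos : ∀ a, a ≠ root → 0 < depth a := by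
      intro a ha
      rcases Nat.eq_zero_or_pos (depth a) with h | h
      · have := depth_spec a
        rw [h] at this
        simp at this
        exact absurd this ha
      · exact h
    have depth_parent : ∀ b, b ≠ root → depth (parent b) < depth b := by
      intro b hb
      have h1 := depth_pos b hb
      have h2 : parent^[(depth b - 1) + 1] b = root := by
        have he : depth b - 1 + 1 = depth b := by omega
        rw [he]; exact depth_spec b
      rw [Function.iterate_succ_apply] at h2
      have := depth_min (parent b) _ h2
      omega
    set M : ℕ := Finset.univ.sup depth with hM
    have depth_le : ∀ a, depth a ≤ M := fun a => Finset.le_sup (Finset.mem_univ a)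
    set onPath : A → Prop := fun a => ∃ n, parent^[n] (u (Fin.last ℓ)) = a with honPath
    set dead : A → Prop := fun a => ∃ j : Fin (ℓ + 1), 0 < (j : ℕ) ∧ (j : ℕ) < ℓ ∧ a = u j
      with hdead
    have onPath_parent : ∀ a, onPath a → onPath (parent a) := by
      rintro a ⟨n, hn⟩
      exact ⟨n + 1, by rw [Function.iterate_succ_apply', hn]⟩
    set g := gMeasure M depth onPath dead ℓ (depth (u 0)) Sa with hg
    have hdec : ∀ x y, R x y → g y < g x := by
      rintro (a | ⟨i, j⟩) (b | ⟨i', j'⟩) hxy <;>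
        simp only [hR, gadgetAdj] at hxy
      · -- tree edge
        rcases hxy with ⟨hpb, hbroot, hbpath⟩ | ⟨hpa, haroot, hapath⟩
        · -- downward edge, parent b = a
          have hadead : ¬ dead a := by
            rintro ⟨j, hj0, hjl, rfl⟩
            have hb : b = u j := hleaf j b hpb
            have hfix : parent (u j) = u j := by rw [← hb]; rw [hpb, hb]
            have hiter : ∀ n, parent^[n] (u j) = u j :=
              fun n => Function.iterate_fixed hfix n
            have : u j = root := by rw [← hiter (depth (u j))]; exact depth_spec (u j)
            exact hbroot (hb.trans this)
          have hdb : 1 ≤ depth b := depth_pos b hbroot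
          have hdab : depth a < depth b := hpb ▸ depth_parent b hbroot
          have hdaM := depth_le a
          have hdbM := depth_le b
          by_cases hpa : onPath a
          · simp only [hg, gMeasure, if_pos hpa, if_neg (show ¬ onPath b from hbpath)]
            by_cases hdb' : dead b
            · rw [if_pos hdb']; push_cast; omega
            · rw [if_neg hdb']; push_cast; omega
          · simp only [hg, gMeasure, if_neg hpa, if_neg hadead, if_neg (show ¬ onPath b from hbpath)]
            by_cases hdb' : dead b
            · rw [if_pos hdb']; push_cast; omega
            · rw [if_neg hdb']; push_cast; omega
        · -- upward edge, parent a = b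
          have hpb : onPath b := hpa ▸ onPath_parent a hapath
          have hdba : depth b < depth a := hpa ▸ depth_parent a haroot
          simp only [hg, gMeasure, if_pos hpa, if_pos hpb, if_pos (show onPath a from hapath)]
          push_cast; omega
      · -- inl → inr : a = u 0, j' = 0, Sa i'
        obtain ⟨rfl, hj0, hSa⟩ := hxy
        have hu0path : ¬ onPath (u 0) := by
          have h0 : ((0 : Fin (ℓ + 1)) : ℕ) < ℓ := by simp; omega
          exact hnotpath 0 h0
        have hu0dead : ¬ dead (u 0) := by
          rintro ⟨j, hj0', hjl, hju⟩
          have := hinj hju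
          have : ((0 : Fin (ℓ + 1)) : ℕ) = (j : ℕ) := congrArg Fin.val this
          simp at this
          omega
        simp only [hg, gMeasure, if_neg hu0path, if_neg hu0dead, if_pos hSa]
        omega
      · -- inr → inl
        rcases hxy with ⟨hjl, rfl, hSb⟩ | ⟨hj0, hjl, rfl⟩
        · -- exit at u (Fin.last ℓ)
          have hSaF : Sa i = false := by
            cases hSaT : Sa i
            · rfl
            · exact absurd hSb (by simpa using hno i hSaT)
          have hupath : onPath (u (Fin.last ℓ)) := ⟨0, rfl⟩
          have := depth_le (u (Fin.last ℓ))
          simp only [hg, gMeasure, if_pos hupath, hSaF, if_neg (by simp : ¬(false = true))]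
          push_cast; omega
        · -- exit at an interior leaf u j (dead vertex)
          have hujpath : ¬ onPath (u j) := hnotpath j hjl
          have hujdead : dead (u j) := ⟨j, hj0, hjl, rfl⟩
          have hd0 := depth_le (u 0)
          have hjle : (j : ℕ) ≤ ℓ := by omega
          cases hSaT : Sa i
          · simp only [hg, gMeasure, if_neg hujpath, if_pos hujdead, hSaT,
              if_neg (by simp : ¬(false = true))]
            push_cast; omega
          · simp only [hg, gMeasure, if_neg hujpath, if_pos hujdead, hSaT, if_pos rfl]
            push_cast; omega
      · -- inr → inr
        obtain ⟨rfl, hj'⟩ := hxy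
        cases hSaT : Sa i
        · simp only [hg, gMeasure, hSaT, if_neg (by simp : ¬(false = true))]
          have hj'le : (j' : ℕ) ≤ ℓ := by omega
          push_cast; omega
        · simp only [hg, gMeasure, hSaT, if_pos rfl]
          push_cast; omega
    have key : ∀ {x y : A ⊕ (Fin q × Fin (ℓ + 1))}, Relation.TransGen R x y → g y < g x := by
      intro x y h
      induction h with
      | single h => exact hdec _ _ h
      | tail _ e ih => exact (hdec _ _ e).trans ih
    exact absurd (key hv) (lt_irrefl _)
  · rintro ⟨i, hSa, hSb⟩
    refine ⟨.inl (u 0), ?_⟩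
    -- the horizontal chain v^i_0 → ⋯ → v^i_n
    have chain : ∀ n : ℕ, (hn : n ≤ ℓ) →
        Relation.ReflTransGen R (.inr (i, ⟨0, by omega⟩)) (.inr (i, ⟨n, by omega⟩)) := by
      intro n
      induction n with
      | zero => intro _; exact Relation.ReflTransGen.refl
      | succ n ih =>
        intro hn
        refine (ih (by omega)).tail ?_
        show R (.inr (i, ⟨n, by omega⟩)) (.inr (i, ⟨n + 1, by omega⟩))
        exact ⟨rfl, rfl⟩
    -- up from u (Fin.last ℓ) to the root
    set Nl : ℕ := Nat.find (hreach (u (Fin.last ℓ))) with hNl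
    have up : ∀ k : ℕ, k ≤ Nl →
        Relation.ReflTransGen R (.inl (u (Fin.last ℓ))) (.inl (parent^[k] (u (Fin.last ℓ)))) := by
      intro k
      induction k with
      | zero => intro _; exact Relation.ReflTransGen.refl
      | succ k ih =>
        intro hk
        refine (ih (by omega)).tail ?_
        show R (.inl (parent^[k] (u (Fin.last ℓ)))) (.inl (parent^[k + 1] (u (Fin.last ℓ))))
        refine Or.inr ⟨(Function.iterate_succ_apply' parent k _).symm, ?_, ⟨k, rfl⟩⟩
        intro hroot'
        have := Nat.find_min' (hreach (u (Fin.last ℓ))) hroot'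
        omega
    -- down from the root to u 0
    set N0 : ℕ := Nat.find (hreach (u 0)) with hN0
    have down : ∀ k : ℕ, k ≤ N0 →
        Relation.ReflTransGen R (.inl (parent^[k] (u 0))) (.inl (u 0)) := by
      intro k
      induction k with
      | zero => intro _; exact Relation.ReflTransGen.refl
      | succ k ih =>
        intro hk
        refine Relation.ReflTransGen.head ?_ (ih (by omega))
        show R (.inl (parent^[k + 1] (u 0))) (.inl (parent^[k] (u 0)))
        refine Or.inl ⟨(Function.iterate_succ_apply' parent k _).symm, ?_, ?_⟩
        · intro hroot'
          have := Nat.find_min' (hreach (u 0)) hroot'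
          omega
        · intro hp
          have : parent^[k] (u 0) = root := hdisj _ ⟨k, rfl⟩ hp
          have := Nat.find_min' (hreach (u 0)) this
          omega
    have upNl : Relation.ReflTransGen R (.inl (u (Fin.last ℓ))) (.inl root) := by
      have h := up Nl le_rfl
      rwa [Nat.find_spec (hreach (u (Fin.last ℓ)))] at h
    have downN0 : Relation.ReflTransGen R (.inl root) (.inl (u 0)) := by
      have h := down N0 le_rfl
      rwa [Nat.find_spec (hreach (u 0))] at h
    have e1 : R (.inl (u 0)) (.inr (i, (⟨0, by omega⟩ : Fin (ℓ + 1)))) :=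
      ⟨rfl, rfl, hSa⟩
    have e3 : R (.inr (i, (⟨ℓ, by omega⟩ : Fin (ℓ + 1)))) (.inl (u (Fin.last ℓ))) :=
      Or.inl ⟨rfl, rfl, hSb⟩
    have c2 : Relation.ReflTransGen R (.inr (i, (⟨0, by omega⟩ : Fin (ℓ + 1))))
        (.inr (i, (⟨ℓ, by omega⟩ : Fin (ℓ + 1)))) := chain ℓ le_rfl
    exact Relation.TransGen.head' e1
      ((c2.tail e3).trans (upNl.trans downN0))
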